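/- Let K be a satisfiable DL-Lite_core^bag ontology with canonical bag model C(K) = ⋃_{i≥0} C_i(K), and let q be a rooted CQ having n atoms. Then the bag answers of q over C(K) equal the bag answers of q over the finite stage C_n(K): q^{C(K)} = q^{C_n(K)}. -/

import Mathlib

/-!
Common formalization of the bag semantics of DL-Lite ontologies
(Nikolaou et al., "The Bag Semantics of Ontology-Based Data Access").
-/

open scoped Classical

noncomputable section

/-- Individuals (constants). -/
abbrev Ind : Type := ℕ
/-- Variables. -/
abbrev Var : Type := ℕ
/-- Atomic concepts (unary predicates). -/
abbrev AtomicConcept : Type := ℕ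
/-- Atomic roles (binary predicates). -/
abbrev AtomicRole : Type := ℕ

/-- A role is an atomic role or its inverse. -/
inductive Role where
  | atomic : AtomicRole → Role
  | inv : AtomicRole → Role
  deriving DecidableEq

/-- A concept is an atomic concept or `∃R` for a role `R`. -/
inductive DLConcept where
  | atomic : AtomicConcept → DLConcept
  | ex : Role → DLConcept
  deriving DecidableEq

/-- TBox axioms: inclusions and disjointness axioms between concepts or roles. -/
inductive TBoxAxiom where
  | cIncl : DLConcept → DLConcept → TBoxAxiom
  | rIncl : Role → Role → TBoxAxiom
  | cDisj : DLConcept → DLConcept → TBoxAxiom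
  | rDisj : Role → Role → TBoxAxiom
  deriving DecidableEq

/-- A DL-Lite_R TBox: a finite set of TBox axioms. -/
abbrev TBox : Type := Finset TBoxAxiom

/-- A DL-Lite_core TBox: only concept inclusions and concept disjointness axioms. -/
def TBox.IsCore (T : TBox) : Prop :=
  ∀ ax ∈ T, (∃ C D, ax = TBoxAxiom.cIncl C D) ∨ (∃ C D, ax = TBoxAxiom.cDisj C D)

/-- ABox assertions. -/
inductive Assertion where
  | conceptA : AtomicConcept → Ind → Assertion
  | roleA : AtomicRole → Ind → Ind → Assertion
  deriving DecidableEq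

/-- A bag ABox: a finite bag of assertions (represented as a multiset). -/
abbrev BagABox : Type := Multiset Assertion

/-- Multiplicity of an assertion in a bag ABox, as an extended natural. -/
def BagABox.mult (A : BagABox) (s : Assertion) : ℕ∞ := (A.count s : ℕ∞)

/-- Sum of an arbitrary family of extended naturals. -/
def bagSum {α : Type*} (f : α → ℕ∞) : ℕ∞ := ⨆ s : Finset α, ∑ x ∈ s, f x

/-- A bag interpretation. -/
structure BagInterp : Type 1 where
  Δ : Type
  dne : Nonempty Δ
  indMap : Ind → Δ
  indInj : Function.Injective indMap
  cI : AtomicConcept → Δ → ℕ∞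
  rI : AtomicRole → Δ → Δ → ℕ∞

/-- Extension of the interpretation function to roles. -/
def BagInterp.roleMult (I : BagInterp) : Role → I.Δ → I.Δ → ℕ∞
  | Role.atomic P => fun u v => I.rI P u v
  | Role.inv P => fun u v => I.rI P v u

/-- Extension of the interpretation function to concepts. -/
def BagInterp.conceptMult (I : BagInterp) : DLConcept → I.Δ → ℕ∞
  | DLConcept.atomic A => fun u => I.cI A u
  | DLConcept.ex R => fun u => bagSum (fun v => I.roleMult R u v)

/-- Multiplicity of an assertion in a bag interpretation. -/
def BagInterp.assertMult (I : BagInterp) : Assertion → ℕ∞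
  | Assertion.conceptA A a => I.cI A (I.indMap a)
  | Assertion.roleA P a b => I.rI P (I.indMap a) (I.indMap b)

/-- Satisfaction of a TBox axiom by a bag interpretation. -/
def BagInterp.SatisfiesAx (I : BagInterp) : TBoxAxiom → Prop
  | TBoxAxiom.cIncl C D => ∀ u, I.conceptMult C u ≤ I.conceptMult D u
  | TBoxAxiom.rIncl R S => ∀ u v, I.roleMult R u v ≤ I.roleMult S u v
  | TBoxAxiom.cDisj C D => ∀ u, min (I.conceptMult C u) (I.conceptMult D u) = 0
  | TBoxAxiom.rDisj R S => ∀ u v, min (I.roleMult R u v) (I.roleMult S u v) = 0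

/-- A DL-Lite^bag ontology. -/
structure Ontology : Type where
  tbox : TBox
  abox : BagABox

/-- `I` is a bag model of the ontology `K`. -/
def BagInterp.IsModel (I : BagInterp) (K : Ontology) : Prop :=
  (∀ ax ∈ K.tbox, I.SatisfiesAx ax) ∧
  ∀ s : Assertion, BagABox.mult K.abox s ≤ I.assertMult s

/-- Satisfiability of an ontology under bag semantics. -/
def Ontology.Satisfiable (K : Ontology) : Prop := ∃ I : BagInterp, I.IsModel K

/- ## Conjunctive queries -/

/-- Terms: variables or individuals. -/
inductive Term where
  | var : Var → Term
  | ind : Ind → Term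
  deriving DecidableEq

def Term.varsOf : Term → List Var
  | Term.var v => [v]
  | Term.ind _ => []

def Term.indsOf : Term → List Ind
  | Term.var _ => []
  | Term.ind a => [a]

/-- Query atoms: concept atoms, role atoms, and equalities. -/
inductive QAtom where
  | conceptAt : AtomicConcept → Term → QAtom
  | roleAt : AtomicRole → Term → Term → QAtom
  | eqAt : Var → Term → QAtom
  deriving DecidableEq

def QAtom.terms : QAtom → List Term
  | QAtom.conceptAt _ t => [t]
  | QAtom.roleAt _ t₁ t₂ => [t₁, t₂]
  | QAtom.eqAt z t => [Term.var z, t]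

def QAtom.vars : QAtom → List Var
  | QAtom.conceptAt _ t => t.varsOf
  | QAtom.roleAt _ t₁ t₂ => t₁.varsOf ++ t₂.varsOf
  | QAtom.eqAt z t => z :: t.varsOf

/-- A conjunctive query `q(x) = ∃y. φ(x,y)`: a tuple of answer variables,
a tuple of existential variables, and a conjunction (list, i.e. allowing
repetitions) of atoms. -/
structure CQ : Type where
  answerVars : List Var
  existVars : List Var
  atoms : List QAtom

def CQ.vars (q : CQ) : List Var := q.answerVars ++ q.existVars

/-- Value of a term under a valuation of the variables. -/
def termVal (I : BagInterp) (f : Var → I.Δ) : Term → I.Δ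
  | Term.var v => f v
  | Term.ind a => I.indMap a

/-- Multiplicity contributed by an atom under a valuation: for predicate atoms the
multiplicity of the image tuple, for equalities the indicator of satisfaction. -/
def QAtom.mult (I : BagInterp) (f : Var → I.Δ) : QAtom → ℕ∞
  | QAtom.conceptAt A t => I.cI A (termVal I f t)
  | QAtom.roleAt P t₁ t₂ => I.rI P (termVal I f t₁) (termVal I f t₂)
  | QAtom.eqAt z t => if f z = termVal I f t then 1 else 0

/-- The bag answers `q^I(ā)`: the sum, over all valuations of the variables of `q`
mapping the answer variables to `ā` (valuations are normalized to a fixed junk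
value outside the variables of `q`), of the product of the multiplicities of the
atom occurrences of `q`. -/
def CQ.bagAnswer (q : CQ) (I : BagInterp) (a : List Ind) : ℕ∞ :=
  bagSum (fun f : {f : Var → I.Δ //
      (∀ v, v ∉ q.vars → f v = I.indMap 0) ∧
      q.answerVars.map f = a.map I.indMap} =>
    (q.atoms.map (QAtom.mult I f.1)).prod)

/-- Bag certain answers: pointwise minimum over all bag models. -/
def bagCertain (K : Ontology) (q : CQ) (a : List Ind) : ℕ∞ :=
  ⨅ (I : BagInterp) (_ : I.IsModel K), q.bagAnswer I a

/-- Base relation of the equivalence relation generated by the equality atoms. -/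
def CQ.eqBase (q : CQ) : Term → Term → Prop := fun t₁ t₂ =>
  ∃ z t, QAtom.eqAt z t ∈ q.atoms ∧ t₁ = Term.var z ∧ t₂ = t

/-- Equivalence of terms generated by the equality atoms of `q`. -/
def CQ.eqRel (q : CQ) : Term → Term → Prop := Relation.EqvGen q.eqBase

/-- Safety: the class of every variable contains a term occurring in a
non-equality atom. -/
def CQ.Safe (q : CQ) : Prop :=
  ∀ v ∈ q.vars, ∃ t : Term, ∃ atm ∈ q.atoms,
    (∀ z s, atm ≠ QAtom.eqAt z s) ∧ t ∈ QAtom.terms atm ∧ q.eqRel (Term.var v) t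

/-- Well-formedness of CQs: repetition-free disjoint tuples of variables, all
variables of the atoms among the declared variables, and safety. -/
def CQ.WellFormed (q : CQ) : Prop :=
  q.answerVars.Nodup ∧ q.existVars.Nodup ∧
  (∀ v ∈ q.answerVars, v ∉ q.existVars) ∧
  (∀ atm ∈ q.atoms, ∀ v ∈ QAtom.vars atm, v ∈ q.vars) ∧
  q.Safe

def CQ.mentionsTerm (q : CQ) (t : Term) : Prop := ∃ atm ∈ q.atoms, t ∈ QAtom.terms atm

/-- Adjacency in the Gaifman graph of `q` (on terms; equality atoms merge the
classes of their two terms, which for connectivity purposes is the same as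
making them adjacent). -/
def CQ.gaifmanAdj (q : CQ) : Term → Term → Prop := fun t₁ t₂ =>
  ∃ atm ∈ q.atoms, t₁ ∈ QAtom.terms atm ∧ t₂ ∈ QAtom.terms atm

/-- A CQ is rooted if every connected component of its Gaifman graph contains
an answer variable or an individual. -/
def CQ.Rooted (q : CQ) : Prop :=
  ∀ t : Term, q.mentionsTerm t →
    ∃ t' : Term, Relation.ReflTransGen q.gaifmanAdj t t' ∧
      ((∃ v ∈ q.answerVars, t' = Term.var v) ∨ ∃ a : Ind, t' = Term.ind a)

/- ## Set semantics -/

/-- A classical (set) interpretation. -/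
structure SetInterp : Type 1 where
  Δ : Type
  dne : Nonempty Δ
  indMap : Ind → Δ
  indInj : Function.Injective indMap
  cI : AtomicConcept → Set Δ
  rI : AtomicRole → Set (Δ × Δ)

def SetInterp.roleSet (I : SetInterp) : Role → Set (I.Δ × I.Δ)
  | Role.atomic P => I.rI P
  | Role.inv P => {p | (p.2, p.1) ∈ I.rI P}

def SetInterp.conceptSet (I : SetInterp) : DLConcept → Set I.Δ
  | DLConcept.atomic A => I.cI A
  | DLConcept.ex R => {u | ∃ v, (u, v) ∈ I.roleSet R}

def SetInterp.SatisfiesAx (I : SetInterp) : TBoxAxiom → Prop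
  | TBoxAxiom.cIncl C D => I.conceptSet C ⊆ I.conceptSet D
  | TBoxAxiom.rIncl R S => I.roleSet R ⊆ I.roleSet S
  | TBoxAxiom.cDisj C D => I.conceptSet C ∩ I.conceptSet D = ∅
  | TBoxAxiom.rDisj R S => I.roleSet R ∩ I.roleSet S = ∅

def SetInterp.SatisfiesAssertion (I : SetInterp) : Assertion → Prop
  | Assertion.conceptA A a => I.indMap a ∈ I.cI A
  | Assertion.roleA P a b => (I.indMap a, I.indMap b) ∈ I.rI P

/-- `I` is a (set) model of the TBox `T` and the set ABox `A`. -/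
def SetInterp.IsModelOf (I : SetInterp) (T : TBox) (A : Finset Assertion) : Prop :=
  (∀ ax ∈ T, I.SatisfiesAx ax) ∧ ∀ s ∈ A, I.SatisfiesAssertion s

def setTermVal (I : SetInterp) (f : Var → I.Δ) : Term → I.Δ
  | Term.var v => f v
  | Term.ind a => I.indMap a

def SetInterp.SatAtom (I : SetInterp) (f : Var → I.Δ) : QAtom → Prop
  | QAtom.conceptAt A t => setTermVal I f t ∈ I.cI A
  | QAtom.roleAt P t₁ t₂ => (setTermVal I f t₁, setTermVal I f t₂) ∈ I.rI P
  | QAtom.eqAt z t => f z = setTermVal I f t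

/-- `q(ā)` holds in the set interpretation `I`. -/
def SetInterp.SatCQ (I : SetInterp) (q : CQ) (a : List Ind) : Prop :=
  ∃ f : Var → I.Δ, q.answerVars.map f = a.map I.indMap ∧ ∀ atm ∈ q.atoms, I.SatAtom f atm

/-- Entailment of a concept inclusion from a TBox (standard set semantics). -/
def TBox.EntailsCI (T : TBox) (C D : DLConcept) : Prop :=
  ∀ I : SetInterp, (∀ ax ∈ T, I.SatisfiesAx ax) → I.conceptSet C ⊆ I.conceptSet D

/- ## The canonical bag model -/

/-- Domain elements of the canonical model: individuals and anonymous elements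
`w^j_{u,R}`. -/
inductive CanElem where
  | ind : Ind → CanElem
  | anon : CanElem → Role → ℕ → CanElem
  deriving DecidableEq

def CanElem.isAnon : CanElem → Prop
  | CanElem.ind _ => False
  | CanElem.anon _ _ _ => True

/-- A stage of the canonical-model construction: a set of active elements and
bag interpretations of the predicates. -/
structure PreInterp : Type where
  active : Set CanElem
  c : AtomicConcept → CanElem → ℕ∞
  r : AtomicRole → CanElem → CanElem → ℕ∞

def PreInterp.toInterp (P : PreInterp) : BagInterp where
  Δ := CanElem
  dne := ⟨CanElem.ind 0⟩
  indMap := CanElem.ind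
  indInj := fun a b h => by cases h; rfl
  cI := P.c
  rI := P.r

/-- Concept closure: `ccl(u,I,T)(C)` is the supremum of `C₀^I(u)` over all
concepts `C₀` with `T ⊨ C₀ ⊑ C`. -/
def cclI (T : TBox) (I : BagInterp) (C : DLConcept) (u : I.Δ) : ℕ∞ :=
  ⨆ C₀ : {C₀ : DLConcept // TBox.EntailsCI T C₀ C}, I.conceptMult C₀.1 u

def PreInterp.ccl (P : PreInterp) (T : TBox) (u : CanElem) (C : DLConcept) : ℕ∞ :=
  cclI T P.toInterp C u

/-- `δ = ccl(u,C_{i-1},T)(∃R) − (∃R)^{C_{i-1}}(u)` (truncated subtraction). -/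
def PreInterp.delta (P : PreInterp) (T : TBox) (u : CanElem) (R : Role) : ℕ∞ :=
  P.ccl T u (DLConcept.ex R) - P.toInterp.conceptMult (DLConcept.ex R) u

/-- The anonymous elements freshly added when stepping from `P`. -/
def PreInterp.NewAnon (P : PreInterp) (T : TBox) (w : CanElem) : Prop :=
  ∃ u R j, w = CanElem.anon u R j ∧ u ∈ P.active ∧ (j : ℕ∞) < P.delta T u R

/-- One step of the canonical-model construction. -/
def PreInterp.step (P : PreInterp) (T : TBox) : PreInterp where
  active := P.active ∪ {w | P.NewAnon T w}
  c := fun A u => if u ∈ P.active then P.ccl T u (DLConcept.atomic A) else 0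
  r := fun P₀ u v =>
    if u ∈ P.active ∧ v ∈ P.active then P.r P₀ u v
    else if ∃ j, v = CanElem.anon u (Role.atomic P₀) j ∧ P.NewAnon T v then 1
    else if ∃ j, u = CanElem.anon v (Role.inv P₀) j ∧ P.NewAnon T u then 1
    else 0

/-- The stages `C_i(K)` of the canonical bag model. -/
def canStage (K : Ontology) : ℕ → PreInterp
  | 0 =>
    { active := Set.range CanElem.ind
      c := fun A u =>
        match u with
        | CanElem.ind a => BagABox.mult K.abox (Assertion.conceptA A a)
        | _ => 0
      r := fun P u v =>
        match u, v with
        | CanElem.ind a, CanElem.ind b => BagABox.mult K.abox (Assertion.roleA P a b)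
        | _, _ => 0 }
  | (i + 1) => (canStage K i).step K.tbox

/-- The canonical bag model `C(K) = ⋃_{i ≥ 0} C_i(K)` (pointwise maximum). -/
def canInterp (K : Ontology) : BagInterp where
  Δ := CanElem
  dne := ⟨CanElem.ind 0⟩
  indMap := CanElem.ind
  indInj := fun a b h => by cases h; rfl
  cI := fun A u => ⨆ i, (canStage K i).c A u
  rI := fun P u v => ⨆ i, (canStage K i).r P u v

/-- The canonical bag model `C(⟨∅,A⟩)` of the ontology with empty TBox:
individuals as domain, every predicate interpreted by its ABox bag. -/
def emptyCanInterp (A : BagABox) : BagInterp where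
  Δ := Ind
  dne := ⟨0⟩
  indMap := id
  indInj := fun _ _ h => h
  cI := fun C a => BagABox.mult A (Assertion.conceptA C a)
  rI := fun P a b => BagABox.mult A (Assertion.roleA P a b)

/-- `[q,z]^{C(K)}`: bag answers over the canonical model computed only over
valuations sending the variables of `z` to anonymous elements and the remaining
existential variables to individuals. -/
def CQ.restrictedAnswer (q : CQ) (K : Ontology) (z : Finset Var) (a : List Ind) : ℕ∞ :=
  bagSum (fun f : {f : Var → CanElem //
      (∀ v, v ∉ q.vars → f v = CanElem.ind 0) ∧
      q.answerVars.map f = a.map CanElem.ind ∧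
      ∀ v ∈ q.existVars, (v ∈ z → CanElem.isAnon (f v)) ∧ (v ∉ z → ∃ b : Ind, f v = CanElem.ind b)} =>
    (q.atoms.map (QAtom.mult (canInterp K) f.1)).prod)

/- ## Ma-connected subsets, realisability, and the per-`z` rewritten query -/

/-- `t` is a variable belonging to `z`. -/
def Term.IsZVar (t : Term) (z : Finset Var) : Prop := ∃ v ∈ z, t = Term.var v

/-- Adjacency in the Gaifman graph restricted to nodes that are variables of `z`. -/
def CQ.zAdj (q : CQ) (z : Finset Var) : Term → Term → Prop := fun t₁ t₂ =>
  q.gaifmanAdj t₁ t₂ ∧ t₁.IsZVar z ∧ t₂.IsZVar z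

/-- `z'` is maximally connected in the anonymous part (ma-connected) within `z`. -/
def CQ.MAConnected (q : CQ) (z z' : Finset Var) : Prop :=
  z' ⊆ z ∧
  (∀ v ∈ z', ∀ w ∈ z, Relation.ReflTransGen (q.zAdj z) (Term.var v) (Term.var w) → w ∈ z') ∧
  (∀ v ∈ z', ∀ w ∈ z', Relation.ReflTransGen (q.zAdj z) (Term.var v) (Term.var w))

/-- `φ_{z'}`: the subconjunction of all atoms of `q` mentioning a variable of `z'`. -/
def CQ.subAtoms (q : CQ) (z' : Finset Var) : List QAtom :=
  q.atoms.filter (fun atm => decide (∃ v ∈ z', v ∈ QAtom.vars atm))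

def termsOfList (l : List QAtom) : List Term :=
  l.foldr (fun atm acc => QAtom.terms atm ++ acc) []

/-- `t_{z'}`: all terms occurring in `φ_{z'}` that are not variables of `z`. -/
def CQ.tTerms (q : CQ) (z z' : Finset Var) : List Term :=
  (termsOfList (q.subAtoms z')).filter (fun t => decide (¬ t.IsZVar z))

/-- `atm` is a legitimate choice of `α_{z'}`: an atom of `φ_{z'}` of the form
`P(t,z)` or `P(z,t)` with `z ∈ z'` and the term `t` not a variable of `z`. -/
def IsAlphaFor (q : CQ) (z z' : Finset Var) (atm : QAtom) : Prop :=
  atm ∈ q.subAtoms z' ∧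
  ((∃ P t v, v ∈ z' ∧ ¬ Term.IsZVar t z ∧ atm = QAtom.roleAt P t (Term.var v)) ∨
   (∃ P t v, v ∈ z' ∧ ¬ Term.IsZVar t z ∧ atm = QAtom.roleAt P (Term.var v) t))

def CQ.inds (q : CQ) : List Ind :=
  (termsOfList q.atoms).foldr (fun t acc => t.indsOf ++ acc) []

def CQ.maxInd (q : CQ) : Ind := q.inds.foldr max 0

/-- The individual `a` of `q^a_{z'}`: the individual among `t_{z'}` if one
exists, and a fresh individual otherwise. -/
def freshA (q : CQ) (z z' : Finset Var) : Ind :=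
  if h : ∃ c : Ind, Term.ind c ∈ q.tTerms z z' then h.choose else q.maxInd + 1

/-- A fresh individual `b` (distinct from `freshA`). -/
def freshB (q : CQ) : Ind := q.maxInd + 2

/-- The one-assertion bag ABox `A'` used to test realisability: `{P(a,b)}` if
`α_{z'} = P(t,z)` and `{P(b,a)}` if `α_{z'} = P(z,t)`. -/
def alphaABox (z' : Finset Var) (atm : QAtom) (a b : Ind) : BagABox :=
  match atm with
  | QAtom.roleAt P _ t₂ =>
      if Term.IsZVar t₂ z' then {Assertion.roleA P a b} else {Assertion.roleA P b a}
  | _ => 0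

def subVars (q : CQ) (z' : Finset Var) : List Var :=
  (q.subAtoms z').foldr (fun atm acc => QAtom.vars atm ++ acc) []

/-- The bag answer `(q^a_{z'})^{C(⟨T,A'⟩)}(⟨⟩)` of the Boolean query
`q^a_{z'}() = ∃x'.∃z'. φ_{z'} ∧ ⋀_{t ∈ t_{z'}}(t = a) ∧ ⋀_{z ∈ z'}(z ≠ a)`
over the canonical model of `⟨T,A'⟩`. -/
def realQAnswer (T : TBox) (q : CQ) (z z' : Finset Var) (atm : QAtom) : ℕ∞ :=
  bagSum (fun f : {f : Var → CanElem //
      (∀ v, v ∉ subVars q z' → f v = CanElem.ind 0) ∧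
      (∀ t ∈ q.tTerms z z',
        termVal (canInterp ⟨T, alphaABox z' atm (freshA q z z') (freshB q)⟩) f t
          = CanElem.ind (freshA q z z')) ∧
      ∀ v ∈ z', f v ≠ CanElem.ind (freshA q z z')} =>
    ((q.subAtoms z').map
      (QAtom.mult (canInterp ⟨T, alphaABox z' atm (freshA q z z') (freshB q)⟩) f.1)).prod)

/-- Equality-consistency of `z`: no equality atom `z = t` with `z ∈ z` and `t ∉ z`. -/
def EqConsistent (q : CQ) (z : Finset Var) : Prop :=
  ∀ v t, QAtom.eqAt v t ∈ q.atoms → v ∈ z → Term.IsZVar t z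

/-- The ma-connected subset `z'` is realisable by `T` (w.r.t. the chosen `α_{z'}`). -/
def RealisableMA (T : TBox) (q : CQ) (z z' : Finset Var) (atm : QAtom) : Prop :=
  1 ≤ realQAnswer T q z z' atm

/-- `z` is realisable by `T`: equality-consistent and every nonempty
ma-connected subset of `z` is realisable. -/
def RealisableZ (T : TBox) (q : CQ) (z : Finset Var) (alpha : Finset Var → QAtom) : Prop :=
  EqConsistent q z ∧
  ∀ z' : Finset Var, q.MAConnected z z' → z'.Nonempty → RealisableMA T q z z' (alpha z')

/-- The nonempty ma-connected subsets of `z`. -/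
def maSets (q : CQ) (z : Finset Var) : Finset (Finset Var) :=
  z.powerset.filter (fun z' => q.MAConnected z z' ∧ z'.Nonempty)

def tTermVars (q : CQ) (z z' : Finset Var) : List Var :=
  (q.tTerms z z').foldr (fun t acc => Term.varsOf t ++ acc) []

/-- The equalities identifying all the terms of `t_{z'}`. -/
def eqAtomsFor (q : CQ) (z z' : Finset Var) : List QAtom :=
  (tTermVars q z z').foldr
    (fun v acc => ((q.tTerms z z').map (fun t => QAtom.eqAt v t)) ++ acc) []

/-- Atoms of `q_z`: the atoms of `q` not mentioning a variable of `z`, plus,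
for each nonempty ma-connected `z' ⊆ z`, the atom `α_{z'}` together with the
equalities identifying the terms of `t_{z'}`. -/
def qzAtoms (q : CQ) (z : Finset Var) (alpha : Finset Var → QAtom) : List QAtom :=
  q.atoms.filter (fun atm => decide (¬ ∃ v ∈ z, v ∈ QAtom.vars atm))
    ++ (maSets q z).toList.foldr (fun z' acc => alpha z' :: (eqAtomsFor q z z' ++ acc)) []

/-- The CQ `q_z(x) = ∃y'. φ_z(x,y')`. -/
def qz (q : CQ) (z : Finset Var) (alpha : Finset Var → QAtom) : CQ where
  answerVars := q.answerVars
  existVars := q.existVars.filter (fun v => decide (∃ atm ∈ qzAtoms q z alpha, v ∈ QAtom.vars atm))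
  atoms := qzAtoms q z alpha

/- ## The BALG rewriting `q̄` -/

/-- Value of an atom of `q_z` after the rewriting step 3 (`chasing back'' with
the TBox): concept atoms `A(t)` become `⋁_{T ⊨ C ⊑ A} ζ_C(t)`, role atoms with a
`z`-variable become the corresponding truncated difference, and the remaining
atoms are evaluated as before. -/
def rewAtomVal (T : TBox) (I : BagInterp) (z : Finset Var) (f : Var → I.Δ) : QAtom → ℕ∞
  | QAtom.conceptAt A t => cclI T I (DLConcept.atomic A) (termVal I f t)
  | QAtom.roleAt P t₁ t₂ =>
      if Term.IsZVar t₂ z then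
        cclI T I (DLConcept.ex (Role.atomic P)) (termVal I f t₁)
          - I.conceptMult (DLConcept.ex (Role.atomic P)) (termVal I f t₁)
      else if Term.IsZVar t₁ z then
        cclI T I (DLConcept.ex (Role.inv P)) (termVal I f t₂)
          - I.conceptMult (DLConcept.ex (Role.inv P)) (termVal I f t₂)
      else I.rI P (termVal I f t₁) (termVal I f t₂)
  | QAtom.eqAt v t => if f v = termVal I f t then 1 else 0

/-- Bag answers of the BALG query `q̄_z`, obtained from `q_z` by projecting only
the variables of `y' ∖ z` and replacing atoms as in `rewAtomVal`. -/
def rewAnswer (T : TBox) (qq : CQ) (z : Finset Var) (I : BagInterp) (a : List Ind) : ℕ∞ :=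
  bagSum (fun f : {f : Var → I.Δ //
      (∀ v, v ∉ qq.answerVars ++ qq.existVars.filter (fun u => decide (u ∉ z)) →
        f v = I.indMap 0) ∧
      qq.answerVars.map f = a.map I.indMap} =>
    (qq.atoms.map (rewAtomVal T I z f.1)).prod)

/- ## BALG¹_ε queries -/

def Term.fvars (t : Term) : Finset Var :=
  match t with
  | Term.var v => {v}
  | Term.ind _ => ∅

/-- Syntax of BALG¹_ε queries. -/
inductive BQuery where
  | atomC : AtomicConcept → Term → BQuery
  | atomR : AtomicRole → Term → Term → BQuery
  | conj : BQuery → BQuery → BQuery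
  | eqSel : BQuery → Var → Term → BQuery
  | proj : List Var → BQuery → BQuery
  | maxU : BQuery → BQuery → BQuery
  | arithU : BQuery → BQuery → BQuery
  | diff : BQuery → BQuery → BQuery

/-- Answer variables of a BALG¹_ε query. -/
def BQuery.fv : BQuery → Finset Var
  | BQuery.atomC _ t => t.fvars
  | BQuery.atomR _ t₁ t₂ => t₁.fvars ∪ t₂.fvars
  | BQuery.conj q₁ q₂ => q₁.fv ∪ q₂.fv
  | BQuery.eqSel q _ t => q.fv ∪ t.fvars
  | BQuery.proj ys q => q.fv \ ys.toFinset
  | BQuery.maxU q₁ _ => q₁.fv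
  | BQuery.arithU q₁ _ => q₁.fv
  | BQuery.diff q₁ _ => q₁.fv

/-- Well-formedness of BALG¹_ε queries. -/
def BQuery.WF : BQuery → Prop
  | BQuery.atomC _ _ => True
  | BQuery.atomR _ _ _ => True
  | BQuery.conj q₁ q₂ => q₁.WF ∧ q₂.WF
  | BQuery.eqSel q x _ => q.WF ∧ x ∈ q.fv
  | BQuery.proj _ q => q.WF
  | BQuery.maxU q₁ q₂ => q₁.WF ∧ q₂.WF ∧ q₁.fv = q₂.fv
  | BQuery.arithU q₁ q₂ => q₁.WF ∧ q₂.WF ∧ q₁.fv = q₂.fv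
  | BQuery.diff q₁ q₂ => q₁.WF ∧ q₂.WF ∧ q₁.fv = q₂.fv

/-- Semantics of BALG¹_ε queries under a valuation of the answer variables. -/
def BQuery.val (I : BagInterp) : BQuery → (Var → I.Δ) → ℕ∞
  | BQuery.atomC A t, f => I.cI A (termVal I f t)
  | BQuery.atomR P t₁ t₂, f => I.rI P (termVal I f t₁) (termVal I f t₂)
  | BQuery.conj q₁ q₂, f => q₁.val I f * q₂.val I f
  | BQuery.eqSel q x t, f => if f x = termVal I f t then q.val I f else 0
  | BQuery.proj ys q, f => bagSum (fun g : {g : Var → I.Δ // ∀ v, v ∉ ys → g v = f v} => q.val I g.1)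
  | BQuery.maxU q₁ q₂, f => max (q₁.val I f) (q₂.val I f)
  | BQuery.arithU q₁ q₂, f => q₁.val I f + q₂.val I f
  | BQuery.diff q₁ q₂, f => q₁.val I f - q₂.val I f

/-- Bag answers of a BALG¹_ε query with answer variables `xs` on a tuple `a`. -/
def BQuery.answer (Q : BQuery) (xs : List Var) (I : BagInterp) (a : List Ind) : ℕ∞ :=
  if a.length = xs.length then Q.val I (fun v => I.indMap (a.getD (xs.idxOf v) 0)) else 0

/- ## Enumerated bags, e-homomorphisms, and e-valuations -/

/-- Enumerated copies of a bag of domain elements (for an atomic concept). -/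
def EBagC (I : BagInterp) (A : AtomicConcept) : Type :=
  {p : I.Δ × ℕ // 1 ≤ p.2 ∧ (p.2 : ℕ∞) ≤ I.cI A p.1}

/-- Enumerated copies of a bag of pairs (for an atomic role). -/
def EBagR (I : BagInterp) (P : AtomicRole) : Type :=
  {p : (I.Δ × I.Δ) × ℕ // 1 ≤ p.2 ∧ (p.2 : ℕ∞) ≤ I.rI P p.1.1 p.1.2}

/-- An e-homomorphism between the enumerated versions of two bag interpretations. -/
structure EHom (I J : BagInterp) where
  h : I.Δ → J.Δ
  hInd : ∀ a : Ind, h (I.indMap a) = J.indMap a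
  hC : ∀ A : AtomicConcept, EBagC I A → EBagC J A
  hC_fst : ∀ (A : AtomicConcept) (x : EBagC I A), (hC A x).1.1 = h x.1.1
  hR : ∀ P : AtomicRole, EBagR I P → EBagR J P
  hR_fst : ∀ (P : AtomicRole) (x : EBagR I P), (hR P x).1.1 = (h x.1.1.1, h x.1.1.2)

/-- Predicate-injectivity on individuals of an e-homomorphism. -/
def EHom.PredInj {I J : BagInterp} (e : EHom I J) : Prop :=
  ∀ u : I.Δ, (∃ a : Ind, e.h u = J.indMap a) →
    (∀ A : AtomicConcept, ∀ x y : EBagC I A,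
      x.1.1 = u → y.1.1 = u → x.1.2 ≠ y.1.2 → e.hC A x ≠ e.hC A y) ∧
    (∀ P : AtomicRole, ∀ x y : EBagR I P, x.1.1.1 = u → y.1.1.1 = u →
      (x.1.1.2, x.1.2) ≠ (y.1.1.2, y.1.2) → e.hR P x ≠ e.hR P y) ∧
    (∀ P : AtomicRole, ∀ x y : EBagR I P, x.1.1.2 = u → y.1.1.2 = u →
      (x.1.1.1, x.1.2) ≠ (y.1.1.1, y.1.2) → e.hR P x ≠ e.hR P y)

/-- Enumerated atoms of a CQ (seen as a bag of atoms). -/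
def EAtom (q : CQ) : Type := {p : QAtom × ℕ // 1 ≤ p.2 ∧ p.2 ≤ q.atoms.count p.1}

/-- An e-valuation of the enumerated query `q^e` over the enumerated
interpretation `I^e`. -/
structure EVal (q : CQ) (I : BagInterp) where
  ν : Var → I.Δ
  hjunk : ∀ v, v ∉ q.vars → ν v = I.indMap 0
  heq : ∀ z t, QAtom.eqAt z t ∈ q.atoms → ν z = termVal I ν t
  ℓ : EAtom q → ℕ
  hone : ∀ e : EAtom q, 1 ≤ ℓ e
  hconcept : ∀ (e : EAtom q) (A : AtomicConcept) (t : Term),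
    e.1.1 = QAtom.conceptAt A t → (ℓ e : ℕ∞) ≤ I.cI A (termVal I ν t)
  hrole : ∀ (e : EAtom q) (P : AtomicRole) (t₁ t₂ : Term),
    e.1.1 = QAtom.roleAt P t₁ t₂ → (ℓ e : ℕ∞) ≤ I.rI P (termVal I ν t₁) (termVal I ν t₂)
  heqm : ∀ (e : EAtom q) (z : Var) (t : Term), e.1.1 = QAtom.eqAt z t → ℓ e = 1

/-- The tuple of domain elements to which an e-atom is sent by an e-valuation. -/
def EVal.imgTerms {q : CQ} {I : BagInterp} (ev : EVal q I) (e : EAtom q) : List I.Δ :=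
  (QAtom.terms e.1.1).map (termVal I ev.ν)

/-- The enumerated image of an e-atom under an e-valuation. -/
def EVal.img {q : CQ} {I : BagInterp} (ev : EVal q I) (e : EAtom q) : List I.Δ × ℕ :=
  (ev.imgTerms e, ev.ℓ e)

/- ## Auxiliary concrete queries -/

/-- The CQ `ζ_C(x)`: `A(x)`, `∃y.P(x,y)` or `∃y.P(y,x)`. -/
def zetaCQ : DLConcept → CQ
  | DLConcept.atomic A => ⟨[0], [], [QAtom.conceptAt A (Term.var 0)]⟩
  | DLConcept.ex (Role.atomic P) => ⟨[0], [1], [QAtom.roleAt P (Term.var 0) (Term.var 1)]⟩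
  | DLConcept.ex (Role.inv P) => ⟨[0], [1], [QAtom.roleAt P (Term.var 1) (Term.var 0)]⟩

/-- The CQ `q(x) = R(x,x)`. -/
def selfCQ (P : AtomicRole) : CQ := ⟨[0], [], [QAtom.roleAt P (Term.var 0) (Term.var 0)]⟩

/- ### Auxiliary development for Statement 6 -/

section Statement6Aux

/-! #### `bagSum` lemmas -/

lemma le_bagSum' {α : Type*} (f : α → ℕ∞) (s : Finset α) : ∑ x ∈ s, f x ≤ bagSum f :=
  le_iSup (fun s : Finset α => ∑ x ∈ s, f x) s

lemma bagSum_le' {α : Type*} {f : α → ℕ∞} {c : ℕ∞} (h : ∀ s : Finset α, ∑ x ∈ s, f x ≤ c) :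
    bagSum f ≤ c := iSup_le h

lemma bagSum_add' {α : Type*} (f g : α → ℕ∞) :
    bagSum (fun x => f x + g x) = bagSum f + bagSum g := by
  rw [bagSum, bagSum, bagSum,
    ENat.iSup_add_iSup (f := fun s : Finset α => ∑ x ∈ s, f x)
      (g := fun s : Finset α => ∑ x ∈ s, g x)
      (fun s t => ⟨s ∪ t,
        add_le_add (Finset.sum_le_sum_of_subset Finset.subset_union_left)
          (Finset.sum_le_sum_of_subset Finset.subset_union_right)⟩)]
  exact iSup_congr fun s => Finset.sum_add_distrib

lemma bagSum_reindex' {α β : Type*} (e : α → β) (he : Function.Injective e)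
    (f : β → ℕ∞) (hf : ∀ b, (∀ a, e a ≠ b) → f b = 0) :
    bagSum f = bagSum (fun a => f (e a)) := by
  apply le_antisymm
  · refine bagSum_le' fun s => ?_
    have h1 : ∑ x ∈ s.preimage e he.injOn, f (e x) = ∑ x ∈ s, f x :=
      Finset.sum_preimage e s he.injOn f (fun x _ hxr => hf x (fun a ha => hxr ⟨a, ha⟩))
    rw [← h1]; exact le_bagSum' _ _
  · refine bagSum_le' fun t => ?_
    rw [← Finset.sum_image (g := e) (f := f) (fun x _ y _ h => he h)]
    exact le_bagSum' _ _

lemma bagSum_indicator' (δ : ℕ∞) :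
    bagSum (fun j : ℕ => if (j : ℕ∞) < δ then 1 else 0) = δ := by
  apply le_antisymm
  · refine bagSum_le' fun s => ?_
    rw [← Finset.sum_filter]
    rw [Finset.sum_const, nsmul_eq_mul, mul_one]
    cases δ with
    | top => exact le_top
    | coe m =>
      have hsub : s.filter (fun j : ℕ => ((j : ℕ∞) < ((m:ℕ) : ℕ∞))) ⊆ Finset.range m := by
        intro j hj
        simp only [Finset.mem_filter] at hj
        exact Finset.mem_range.2 (ENat.coe_lt_coe.mp hj.2)
      have hcard := Finset.card_le_card hsub
      rw [Finset.card_range] at hcard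
      exact ENat.coe_le_coe.mpr hcard
  · have hsum : ∀ m : ℕ, (∀ j < m, (j : ℕ∞) < δ) →
        (m : ℕ∞) ≤ bagSum (fun j : ℕ => if (j : ℕ∞) < δ then 1 else 0) := by
      intro m hm
      refine le_trans ?_ (le_bagSum' _ (Finset.range m))
      have : ∀ j ∈ Finset.range m, (if (j : ℕ∞) < δ then (1 : ℕ∞) else 0) = 1 := by
        intro j hj
        exact if_pos (hm j (Finset.mem_range.1 hj))
      rw [Finset.sum_congr rfl this]
      simp
    cases δ with
    | top =>
      refine le_trans (le_of_eq ENat.iSup_natCast.symm)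
        (iSup_le fun m => hsum m (fun j _ => ENat.coe_lt_top j))
    | coe m =>
      exact hsum m (fun j hj => by exact_mod_cast hj)

/-! #### Entailment and `cclI` -/

lemma entailsCI_refl (T : TBox) (C : DLConcept) : T.EntailsCI C C := fun _ _ => subset_rfl

lemma entailsCI_trans {T : TBox} {C D E : DLConcept} (h1 : T.EntailsCI C D)
    (h2 : T.EntailsCI D E) : T.EntailsCI C E := fun I hI => (h1 I hI).trans (h2 I hI)

lemma le_cclI (T : TBox) (I : BagInterp) (C : DLConcept) (u : I.Δ) :
    I.conceptMult C u ≤ cclI T I C u :=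
  le_iSup (fun C₀ : {C₀ : DLConcept // T.EntailsCI C₀ C} => I.conceptMult C₀.1 u)
    ⟨C, entailsCI_refl T C⟩

lemma cclI_mono_entails {T : TBox} {C D : DLConcept} (h : T.EntailsCI C D)
    (I : BagInterp) (u : I.Δ) : cclI T I C u ≤ cclI T I D u :=
  iSup_le fun C₀ =>
    le_iSup (fun C₁ : {C₁ : DLConcept // T.EntailsCI C₁ D} => I.conceptMult C₁.1 u)
      ⟨C₀.1, entailsCI_trans C₀.2 h⟩

lemma iSup_cclI (T : TBox) (I : BagInterp) (C : DLConcept) (u : I.Δ) :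
    (⨆ C₀ : {C₀ : DLConcept // T.EntailsCI C₀ C}, cclI T I C₀.1 u) = cclI T I C u :=
  le_antisymm (iSup_le fun C₀ => cclI_mono_entails C₀.2 I u)
    (le_iSup_of_le ⟨C, entailsCI_refl T C⟩ (by exact iSup_le fun C₁ => le_iSup (fun C₂ : {C₂ : DLConcept // T.EntailsCI C₂ C} => I.conceptMult C₂.1 u) ⟨C₁.1, C₁.2⟩))

/-! #### Stages of the canonical model -/

def stAct (K : Ontology) (i : ℕ) : Set CanElem := (canStage K i).active
def stC (K : Ontology) (i : ℕ) (A : AtomicConcept) (u : CanElem) : ℕ∞ := (canStage K i).c A u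
def stR (K : Ontology) (i : ℕ) (P : AtomicRole) (u v : CanElem) : ℕ∞ := (canStage K i).r P u v
def stRM (K : Ontology) (i : ℕ) (R : Role) (u v : CanElem) : ℕ∞ :=
  (canStage K i).toInterp.roleMult R u v
def stEM (K : Ontology) (i : ℕ) (R : Role) (u : CanElem) : ℕ∞ :=
  (canStage K i).toInterp.conceptMult (DLConcept.ex R) u
def stCCL (K : Ontology) (i : ℕ) (u : CanElem) (C : DLConcept) : ℕ∞ :=
  cclI K.tbox (canStage K i).toInterp C u
def stD (K : Ontology) (i : ℕ) (u : CanElem) (R : Role) : ℕ∞ :=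
  (canStage K i).delta K.tbox u R

lemma stRM_atomic (K : Ontology) (i : ℕ) (P : AtomicRole) (u v : CanElem) :
    stRM K i (Role.atomic P) u v = stR K i P u v := rfl
lemma stRM_inv (K : Ontology) (i : ℕ) (P : AtomicRole) (u v : CanElem) :
    stRM K i (Role.inv P) u v = stR K i P v u := rfl
lemma stEM_def (K : Ontology) (i : ℕ) (R : Role) (u : CanElem) :
    stEM K i R u = bagSum (fun v => stRM K i R u v) := rfl
lemma stD_def (K : Ontology) (i : ℕ) (u : CanElem) (R : Role) :
    stD K i u R = stCCL K i u (DLConcept.ex R) - stEM K i R u := rfl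

lemma stAct_succ (K : Ontology) (i : ℕ) :
    stAct K (i+1) = stAct K i ∪ {w | (canStage K i).NewAnon K.tbox w} := rfl

lemma stC_succ (K : Ontology) (i : ℕ) (A : AtomicConcept) (u : CanElem) :
    stC K (i+1) A u = if u ∈ stAct K i then stCCL K i u (DLConcept.atomic A) else 0 := rfl

lemma stR_succ (K : Ontology) (i : ℕ) (P : AtomicRole) (u v : CanElem) :
    stR K (i+1) P u v =
      if u ∈ stAct K i ∧ v ∈ stAct K i then stR K i P u v
      else if ∃ j, v = CanElem.anon u (Role.atomic P) j ∧ (canStage K i).NewAnon K.tbox v then 1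
      else if ∃ j, u = CanElem.anon v (Role.inv P) j ∧ (canStage K i).NewAnon K.tbox u then 1
      else 0 := rfl

lemma ind_act0 (K : Ontology) (a : Ind) : CanElem.ind a ∈ stAct K 0 := ⟨a, rfl⟩

lemma stAct_mono (K : Ontology) : ∀ {i j : ℕ}, i ≤ j → stAct K i ⊆ stAct K j := by
  intro i j h
  induction h with
  | refl => exact subset_rfl
  | step _ ih => exact ih.trans Set.subset_union_left

lemma newAnon_anon {K : Ontology} {i : ℕ} {u : CanElem} {R : Role} {j : ℕ}
    (h : (canStage K i).NewAnon K.tbox (CanElem.anon u R j)) :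
    u ∈ stAct K i ∧ (j : ℕ∞) < stD K i u R := by
  obtain ⟨u', R', j', heq, hu', hlt⟩ := h
  injection heq with h1 h2 h3
  subst h1; subst h2; subst h3
  exact ⟨hu', hlt⟩

lemma stC_support {K : Ontology} {i : ℕ} {A : AtomicConcept} {u : CanElem}
    (h : stC K i A u ≠ 0) : u ∈ stAct K i := by
  cases i with
  | zero =>
    cases u with
    | ind a => exact ind_act0 K a
    | anon p R j => exact absurd rfl h
  | succ m =>
    by_cases hu : u ∈ stAct K m
    · exact stAct_mono K (Nat.le_succ m) hu
    · exact absurd (by rw [stC_succ, if_neg hu]) h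

lemma stC_zero {K : Ontology} {i : ℕ} {A : AtomicConcept} {u : CanElem}
    (h : u ∉ stAct K i) : stC K i A u = 0 := by
  by_contra h'; exact h (stC_support h')

lemma stR_support {K : Ontology} {P : AtomicRole} {u v : CanElem} :
    ∀ {i : ℕ}, stR K i P u v ≠ 0 → u ∈ stAct K i ∧ v ∈ stAct K i := by
  intro i
  induction i with
  | zero =>
    intro h
    cases u with
    | ind a =>
      cases v with
      | ind b => exact ⟨ind_act0 K a, ind_act0 K b⟩
      | anon p R j => exact absurd rfl h
    | anon p R j => exact absurd rfl h
  | succ m ih =>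
    intro h
    rw [stR_succ] at h
    by_cases h1 : u ∈ stAct K m ∧ v ∈ stAct K m
    · rw [if_pos h1] at h
      exact ⟨stAct_mono K (Nat.le_succ m) h1.1, stAct_mono K (Nat.le_succ m) h1.2⟩
    · rw [if_neg h1] at h
      by_cases h2 : ∃ j, v = CanElem.anon u (Role.atomic P) j ∧ (canStage K m).NewAnon K.tbox v
      · obtain ⟨j, hj, hn⟩ := h2
        refine ⟨?_, Or.inr hn⟩
        subst hj
        exact stAct_mono K (Nat.le_succ m) (newAnon_anon hn).1
      · rw [if_neg h2] at h
        by_cases h3 : ∃ j, u = CanElem.anon v (Role.inv P) j ∧ (canStage K m).NewAnon K.tbox u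
        · obtain ⟨j, hj, hn⟩ := h3
          refine ⟨Or.inr hn, ?_⟩
          subst hj
          exact stAct_mono K (Nat.le_succ m) (newAnon_anon hn).1
        · rw [if_neg h3] at h
          exact absurd rfl h

lemma stR_zero {K : Ontology} {i : ℕ} {P : AtomicRole} {u v : CanElem}
    (h : ¬ (u ∈ stAct K i ∧ v ∈ stAct K i)) : stR K i P u v = 0 := by
  by_contra h'; exact h (stR_support h')

lemma stRM_support {K : Ontology} {i : ℕ} {R : Role} {u v : CanElem}
    (h : stRM K i R u v ≠ 0) : u ∈ stAct K i ∧ v ∈ stAct K i := by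
  cases R with
  | atomic P => exact stR_support h
  | inv P => exact (stR_support h).symm

lemma stRM_zero {K : Ontology} {i : ℕ} {R : Role} {u v : CanElem}
    (h : ¬ (u ∈ stAct K i ∧ v ∈ stAct K i)) : stRM K i R u v = 0 := by
  by_contra h'; exact h (stRM_support h')

lemma anon_active {K : Ontology} {u : CanElem} {R : Role} {j : ℕ} :
    ∀ {i : ℕ}, CanElem.anon u R j ∈ stAct K i → ∃ k, k + 1 ≤ i ∧ u ∈ stAct K k := by
  intro i
  induction i with
  | zero => rintro ⟨a, ha⟩; exact absurd ha (by simp)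
  | succ m ih =>
    rintro (h | h)
    · obtain ⟨k, hk, hu⟩ := ih h
      exact ⟨k, hk.trans (Nat.le_succ m), hu⟩
    · exact ⟨m, le_refl _, (newAnon_anon h).1⟩

lemma stRM_succ_active {K : Ontology} {i : ℕ} {u v : CanElem}
    (hu : u ∈ stAct K i) (hv : v ∈ stAct K i) (R : Role) :
    stRM K (i+1) R u v = stRM K i R u v := by
  cases R with
  | atomic P =>
    rw [stRM_atomic, stRM_atomic, stR_succ, if_pos ⟨hu, hv⟩]
  | inv P =>
    rw [stRM_inv, stRM_inv, stR_succ, if_pos ⟨hv, hu⟩]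

lemma stRM_succ_new {K : Ontology} {i : ℕ} {u v : CanElem}
    (hu : u ∈ stAct K i) (hv : v ∉ stAct K i) (R : Role) :
    stRM K (i+1) R u v =
      if ∃ j : ℕ, v = CanElem.anon u R j ∧ (j : ℕ∞) < stD K i u R then 1 else 0 := by
  cases R with
  | atomic P =>
    rw [stRM_atomic, stR_succ, if_neg (fun h => hv h.2)]
    by_cases h2 : ∃ j, v = CanElem.anon u (Role.atomic P) j ∧ (canStage K i).NewAnon K.tbox v
    · rw [if_pos h2]
      obtain ⟨j, hj, hn⟩ := h2
      subst hj
      rw [if_pos ⟨j, rfl, (newAnon_anon hn).2⟩]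
    · rw [if_neg h2]
      have h3 : ¬ ∃ j, u = CanElem.anon v (Role.inv P) j ∧ (canStage K i).NewAnon K.tbox u := by
        rintro ⟨j, hj, hn⟩
        subst hj
        exact hv (newAnon_anon hn).1
      rw [if_neg h3]
      have h4 : ¬ ∃ j : ℕ, v = CanElem.anon u (Role.atomic P) j ∧
          (j : ℕ∞) < stD K i u (Role.atomic P) := by
        rintro ⟨j, hj, hlt⟩
        subst hj
        exact h2 ⟨j, rfl, ⟨u, Role.atomic P, j, rfl, hu, hlt⟩⟩
      rw [if_neg h4]
  | inv P =>
    rw [stRM_inv, stR_succ, if_neg (fun h => hv h.1)]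
    have h2 : ¬ ∃ j, u = CanElem.anon v (Role.atomic P) j ∧ (canStage K i).NewAnon K.tbox u := by
      rintro ⟨j, hj, hn⟩
      subst hj
      exact hv (newAnon_anon hn).1
    rw [if_neg h2]
    by_cases h3 : ∃ j, v = CanElem.anon u (Role.inv P) j ∧ (canStage K i).NewAnon K.tbox v
    · rw [if_pos h3]
      obtain ⟨j, hj, hn⟩ := h3
      subst hj
      rw [if_pos ⟨j, rfl, (newAnon_anon hn).2⟩]
    · rw [if_neg h3]
      have h4 : ¬ ∃ j : ℕ, v = CanElem.anon u (Role.inv P) j ∧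
          (j : ℕ∞) < stD K i u (Role.inv P) := by
        rintro ⟨j, hj, hlt⟩
        subst hj
        exact h3 ⟨j, rfl, ⟨u, Role.inv P, j, rfl, hu, hlt⟩⟩
      rw [if_neg h4]

lemma stEM_le_ccl (K : Ontology) (i : ℕ) (R : Role) (u : CanElem) :
    stEM K i R u ≤ stCCL K i u (DLConcept.ex R) :=
  le_cclI K.tbox (canStage K i).toInterp (DLConcept.ex R) u
/-! #### The main stabilization induction -/

theorem stage_main (K : Ontology) :
    ∀ i : ℕ, (∀ u ∈ stAct K i, ∀ R, stEM K (i+1) R u = stCCL K i u (DLConcept.ex R)) ∧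
      (∀ u ∈ stAct K i, ∀ C, stCCL K (i+1) u C = stCCL K i u C) := by
  intro i
  induction i using Nat.strong_induction_on with
  | _ i IH =>
  have M2 : ∀ u ∈ stAct K i, ∀ R, stEM K (i+1) R u = stCCL K i u (DLConcept.ex R) := by
    intro u hu R
    by_cases hprev : ∃ k, i = k + 1 ∧ u ∈ stAct K k
    · obtain ⟨k, rfl, huk⟩ := hprev
      have IHk := IH k (Nat.lt_succ_self k)
      have hccl : stCCL K (k+1) u (DLConcept.ex R) = stCCL K k u (DLConcept.ex R) :=
        IHk.2 u huk _
      have hem : stEM K (k+1) R u = stCCL K k u (DLConcept.ex R) := IHk.1 u huk R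
      have hD : stD K (k+1) u R = 0 := by rw [stD_def, hccl, hem, tsub_self]
      have hpt : ∀ v, stRM K (k+1+1) R u v = stRM K (k+1) R u v := by
        intro v
        by_cases hv : v ∈ stAct K (k+1)
        · exact stRM_succ_active hu hv R
        · rw [stRM_succ_new hu hv R]
          rw [if_neg, eq_comm]
          · exact stRM_zero (fun h => hv h.2)
          · rintro ⟨j, hj, hlt⟩
            rw [hD] at hlt
            exact absurd hlt (by simp)
      calc stEM K (k+1+1) R u = stEM K (k+1) R u := by
            rw [stEM_def, stEM_def]; exact congrArg bagSum (funext hpt)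
        _ = stCCL K k u (DLConcept.ex R) := hem
        _ = stCCL K (k+1) u (DLConcept.ex R) := hccl.symm
    · have hchild : ∀ (R' : Role) (j : ℕ), CanElem.anon u R' j ∉ stAct K i := by
        intro R' j hmem
        obtain ⟨k, hk1, huk⟩ := anon_active hmem
        cases i with
        | zero => omega
        | succ m => exact hprev ⟨m, rfl, stAct_mono K (by omega) huk⟩
      have hpt : ∀ v, stRM K (i+1) R u v
          = stRM K i R u v
            + (if ∃ j : ℕ, v = CanElem.anon u R j ∧ (j : ℕ∞) < stD K i u R then 1 else 0) := by
        intro v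
        by_cases hv : v ∈ stAct K i
        · rw [stRM_succ_active hu hv R, if_neg, add_zero]
          rintro ⟨j, hj, _⟩
          rw [hj] at hv
          exact hchild R j hv
        · rw [stRM_succ_new hu hv R, stRM_zero (fun h => hv h.2), zero_add]
      have hcnt : bagSum (fun v =>
          (if ∃ j : ℕ, v = CanElem.anon u R j ∧ (j : ℕ∞) < stD K i u R then (1:ℕ∞) else 0))
          = stD K i u R := by
        rw [bagSum_reindex' (fun j : ℕ => CanElem.anon u R j)
          (fun a b h => by injection h)
          _ (fun b hb => if_neg (fun ⟨j, hj, _⟩ => hb j hj.symm))]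
        have hptw : ∀ a : ℕ,
            (if ∃ j : ℕ, CanElem.anon u R a = CanElem.anon u R j ∧ (j : ℕ∞) < stD K i u R
              then (1:ℕ∞) else 0) = if (a : ℕ∞) < stD K i u R then 1 else 0 := by
          intro a
          refine if_congr ⟨?_, fun h => ⟨a, rfl, h⟩⟩ rfl rfl
          rintro ⟨j, hj, hlt⟩
          injection hj with h1 h2 h3
          subst h3
          exact hlt
        rw [congrArg bagSum (funext hptw)]
        exact bagSum_indicator' _
      calc stEM K (i+1) R u
          = bagSum (fun v => stRM K i R u v
              + (if ∃ j : ℕ, v = CanElem.anon u R j ∧ (j : ℕ∞) < stD K i u R then 1 else 0)) := by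
            rw [stEM_def]; exact congrArg bagSum (funext hpt)
        _ = stEM K i R u + stD K i u R := by
            rw [bagSum_add', hcnt, ← stEM_def]
        _ = stCCL K i u (DLConcept.ex R) := by
            rw [stD_def]
            exact add_tsub_cancel_of_le (stEM_le_ccl K i R u)
  refine ⟨M2, ?_⟩
  intro u hu C
  have hmult : ∀ C₀ : DLConcept,
      (canStage K (i+1)).toInterp.conceptMult C₀ u = stCCL K i u C₀ := by
    intro C₀
    cases C₀ with
    | atomic A =>
      show stC K (i+1) A u = _
      rw [stC_succ, if_pos hu]
    | ex R => exact M2 u hu R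
  show cclI K.tbox (canStage K (i+1)).toInterp C u = _
  exact (congrArg iSup (funext fun C₀ : {C₀ : DLConcept // K.tbox.EntailsCI C₀ C} =>
    hmult C₀.1)).trans
    (iSup_cclI K.tbox (canStage K i).toInterp C u)

lemma stEM_act {K : Ontology} {i : ℕ} {u : CanElem} (hu : u ∈ stAct K i) (R : Role) :
    stEM K (i+1) R u = stCCL K i u (DLConcept.ex R) := (stage_main K i).1 u hu R

lemma stCCL_act {K : Ontology} {i : ℕ} {u : CanElem} (hu : u ∈ stAct K i) (C : DLConcept) :
    stCCL K (i+1) u C = stCCL K i u C := (stage_main K i).2 u hu C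

lemma stD_zero {K : Ontology} {i : ℕ} {u : CanElem} (hu : u ∈ stAct K i) (R : Role) :
    stD K (i+1) u R = 0 := by
  rw [stD_def, stCCL_act hu, stEM_act hu, tsub_self]

lemma stCCL_stable {K : Ontology} {i : ℕ} {u : CanElem} (hu : u ∈ stAct K i) :
    ∀ {j : ℕ}, i ≤ j → ∀ C, stCCL K j u C = stCCL K i u C := by
  intro j hij
  induction hij with
  | refl => intro C; rfl
  | @step m hm ih =>
    intro C
    rw [stCCL_act (stAct_mono K hm hu) C, ih C]

lemma stC_stable {K : Ontology} {i : ℕ} {u : CanElem} (hu : u ∈ stAct K i) :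
    ∀ {j : ℕ}, i + 1 ≤ j → ∀ A, stC K j A u = stC K (i+1) A u := by
  intro j hij A
  obtain ⟨m, rfl⟩ : ∃ m, j = m + 1 := ⟨j - 1, by omega⟩
  rw [stC_succ, stC_succ, if_pos hu, if_pos (stAct_mono K (by omega) hu)]
  exact stCCL_stable hu (by omega) _

lemma stR_stable {K : Ontology} {i : ℕ} {u v : CanElem}
    (hu : u ∈ stAct K i) (hv : v ∈ stAct K i) :
    ∀ {j : ℕ}, i ≤ j → ∀ P, stR K j P u v = stR K i P u v := by
  intro j hij
  induction hij with
  | refl => intro P; rfl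
  | @step m hm ih =>
    intro P
    rw [stR_succ, if_pos ⟨stAct_mono K hm hu, stAct_mono K hm hv⟩, ih P]

lemma stC_mono {K : Ontology} {A : AtomicConcept} {u : CanElem} :
    ∀ {i j : ℕ}, i ≤ j → stC K i A u ≤ stC K j A u := by
  intro i j hij
  induction hij with
  | refl => exact le_refl _
  | @step m hm ih =>
    refine ih.trans ?_
    by_cases hu : u ∈ stAct K m
    · rw [stC_succ, if_pos hu]
      exact le_cclI K.tbox (canStage K m).toInterp (DLConcept.atomic A) u
    · rw [stC_zero hu]
      exact zero_le

lemma stR_mono {K : Ontology} {P : AtomicRole} {u v : CanElem} :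
    ∀ {i j : ℕ}, i ≤ j → stR K i P u v ≤ stR K j P u v := by
  intro i j hij
  induction hij with
  | refl => exact le_refl _
  | @step m hm ih =>
    refine ih.trans ?_
    by_cases hb : u ∈ stAct K m ∧ v ∈ stAct K m
    · rw [stR_succ, if_pos hb]
    · rw [stR_zero hb]
      exact zero_le

/-! #### The canonical model vs. the stages -/

lemma can_cI (K : Ontology) (A : AtomicConcept) (u : CanElem) :
    (canInterp K).cI A u = ⨆ i, stC K i A u := rfl

lemma can_rI (K : Ontology) (P : AtomicRole) (u v : CanElem) :
    (canInterp K).rI P u v = ⨆ i, stR K i P u v := rfl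

lemma can_c {K : Ontology} {i : ℕ} {u : CanElem} (hu : u ∈ stAct K i) (A : AtomicConcept) :
    (canInterp K).cI A u = stC K (i+1) A u := by
  rw [can_cI]
  refine le_antisymm (iSup_le fun j => ?_) (le_iSup (fun j => stC K j A u) (i+1))
  rcases le_total j (i+1) with h | h
  · exact stC_mono h
  · exact le_of_eq (stC_stable hu h A)

lemma can_r {K : Ontology} {i : ℕ} {u v : CanElem}
    (hu : u ∈ stAct K i) (hv : v ∈ stAct K i) (P : AtomicRole) :
    (canInterp K).rI P u v = stR K i P u v := by
  rw [can_rI]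
  refine le_antisymm (iSup_le fun j => ?_) (le_iSup (fun j => stR K j P u v) i)
  rcases le_total j i with h | h
  · exact stR_mono h
  · exact le_of_eq (stR_stable hu hv h P)

lemma can_c_support {K : Ontology} {A : AtomicConcept} {u : CanElem}
    (h : (canInterp K).cI A u ≠ 0) : ∃ i, u ∈ stAct K i := by
  by_contra hall
  push_neg at hall
  refine h ?_
  rw [can_cI]
  exact ENat.iSup_eq_zero.2 fun i => stC_zero (hall i)

lemma can_r_support {K : Ontology} {P : AtomicRole} {u v : CanElem}
    (h : (canInterp K).rI P u v ≠ 0) : ∃ i, u ∈ stAct K i ∧ v ∈ stAct K i := by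
  by_contra hall
  push_neg at hall
  refine h ?_
  rw [can_rI]
  refine ENat.iSup_eq_zero.2 fun i => stR_zero fun hb => ?_
  exact absurd hb.2 (hall i hb.1)

/-! #### Depth -/

def cDepth : CanElem → ℕ
  | CanElem.ind _ => 0
  | CanElem.anon u _ _ => cDepth u + 1

lemma act_depth (K : Ontology) : ∀ i : ℕ, ∀ u ∈ stAct K i, u ∈ stAct K (cDepth u) := by
  intro i
  induction i using Nat.strong_induction_on with
  | _ i IH =>
  intro u hu
  cases u with
  | ind a => exact ind_act0 K a
  | anon p R j =>
    cases i with
    | zero =>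
      obtain ⟨a, ha⟩ := hu
      exact absurd ha (by simp)
    | succ m =>
      rcases hu with hu | hu
      · exact IH m (Nat.lt_succ_self m) _ hu
      · obtain ⟨hp, hlt⟩ := newAnon_anon hu
        have hpd : p ∈ stAct K (cDepth p) := IH m (Nat.lt_succ_self m) p hp
        rcases lt_trichotomy m (cDepth p) with h | h | h
        · exact stAct_mono K (i := m+1) (j := cDepth (CanElem.anon p R j))
            (by simp only [cDepth]; omega) (Or.inr hu)
        · show CanElem.anon p R j ∈ stAct K (cDepth p + 1)
          rw [← h]
          exact Or.inr hu
        · exfalso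
          obtain ⟨k, rfl⟩ : ∃ k, m = k + 1 := ⟨m - 1, by omega⟩
          have : stD K (k+1) p R = 0 := stD_zero (stAct_mono K (by omega) hpd) R
          rw [this] at hlt
          exact absurd hlt (by simp)

lemma stR_shape {K : Ontology} {P : AtomicRole} {u v : CanElem} :
    ∀ {i : ℕ}, stR K i P u v ≠ 0 →
      (∃ a b, u = CanElem.ind a ∧ v = CanElem.ind b) ∨
      (∃ R j, v = CanElem.anon u R j) ∨ (∃ R j, u = CanElem.anon v R j) := by
  intro i
  induction i with
  | zero =>
    intro h
    cases u with
    | ind a =>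
      cases v with
      | ind b => exact Or.inl ⟨a, b, rfl, rfl⟩
      | anon p R j => exact absurd rfl h
    | anon p R j => exact absurd rfl h
  | succ m ih =>
    intro h
    rw [stR_succ] at h
    by_cases h1 : u ∈ stAct K m ∧ v ∈ stAct K m
    · rw [if_pos h1] at h
      exact ih h
    · rw [if_neg h1] at h
      by_cases h2 : ∃ j, v = CanElem.anon u (Role.atomic P) j ∧ (canStage K m).NewAnon K.tbox v
      · obtain ⟨j, hj, _⟩ := h2
        exact Or.inr (Or.inl ⟨Role.atomic P, j, hj⟩)
      · rw [if_neg h2] at h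
        by_cases h3 : ∃ j, u = CanElem.anon v (Role.inv P) j ∧ (canStage K m).NewAnon K.tbox u
        · obtain ⟨j, hj, _⟩ := h3
          exact Or.inr (Or.inr ⟨Role.inv P, j, hj⟩)
        · rw [if_neg h3] at h
          exact absurd rfl h
/-! #### The Gaifman graph and the depth bound -/

def gGraph (q : CQ) : SimpleGraph Term where
  Adj := fun x y => x ≠ y ∧ q.gaifmanAdj x y
  symm := by
    constructor
    rintro x y ⟨hne, atm, hm, hx, hy⟩
    exact ⟨hne.symm, atm, hm, hy, hx⟩
  loopless := ⟨fun x h => h.1 rfl⟩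

lemma gGraph_adj (q : CQ) {x y : Term} :
    (gGraph q).Adj x y ↔ x ≠ y ∧ q.gaifmanAdj x y := Iff.rfl

lemma reflTransGen_reachable (q : CQ) : ∀ {x y : Term},
    Relation.ReflTransGen q.gaifmanAdj x y → (gGraph q).Reachable x y := by
  intro x y h
  induction h with
  | refl => exact SimpleGraph.Reachable.refl x
  | @tail b c hab hbc ih =>
    by_cases hbc' : b = c
    · subst hbc'; exact ih
    · exact ih.trans (SimpleGraph.Adj.reachable ((gGraph_adj q).2 ⟨hbc', hbc⟩))

def qPair : QAtom → Sym2 Term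
  | QAtom.conceptAt _ t => s(t, t)
  | QAtom.roleAt _ t1 t2 => s(t1, t2)
  | QAtom.eqAt z t => s(Term.var z, t)

lemma pair_eq_aux {x y c d : Term} (hne : x ≠ y) (hx : x = c ∨ x = d) (hy : y = c ∨ y = d) :
    s(x, y) = s(c, d) := by
  rcases hx with rfl | rfl
  · rcases hy with rfl | rfl
    · exact absurd rfl hne
    · rfl
  · rcases hy with rfl | rfl
    · exact Sym2.eq_swap
    · exact absurd rfl hne

lemma edge_eq_qPair (G : SimpleGraph Term) (atm : QAtom) :
    ∀ e : Sym2 Term, e ∈ G.edgeSet → (∀ z ∈ e, z ∈ QAtom.terms atm) → e = qPair atm := by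
  intro e
  induction e using Sym2.ind with
  | _ x y =>
    intro hE hmem
    have hA := (SimpleGraph.mem_edgeSet (G := G)).1 hE
    have hne : x ≠ y := hA.ne
    have hx := hmem x (Sym2.mem_mk_left x y)
    have hy := hmem y (Sym2.mem_mk_right x y)
    cases atm with
    | conceptAt A t =>
      simp only [QAtom.terms, List.mem_singleton] at hx hy
      exact absurd (hx.trans hy.symm) hne
    | roleAt P t1 t2 =>
      simp only [QAtom.terms, List.mem_cons, List.mem_singleton, List.not_mem_nil,
        or_false] at hx hy
      exact pair_eq_aux hne hx hy
    | eqAt z t =>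
      simp only [QAtom.terms, List.mem_cons, List.mem_singleton, List.not_mem_nil,
        or_false] at hx hy
      exact pair_eq_aux hne hx hy

lemma mult_stage_le_can (K : Ontology) (n : ℕ) (f : Var → CanElem) (atm : QAtom) :
    QAtom.mult ((canStage K n).toInterp) f atm ≤ QAtom.mult (canInterp K) f atm := by
  cases atm with
  | conceptAt A t =>
    show stC K n A (termVal ((canStage K n).toInterp) f t)
        ≤ (canInterp K).cI A (termVal (canInterp K) f t)
    have htv : termVal ((canStage K n).toInterp) f t = termVal (canInterp K) f t := by
      cases t <;> rfl
    rw [htv]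
    exact le_iSup (fun i => stC K i A (termVal (canInterp K) f t)) n
  | roleAt P t1 t2 =>
    show stR K n P (termVal ((canStage K n).toInterp) f t1) (termVal ((canStage K n).toInterp) f t2)
        ≤ (canInterp K).rI P (termVal (canInterp K) f t1) (termVal (canInterp K) f t2)
    have htv1 : termVal ((canStage K n).toInterp) f t1 = termVal (canInterp K) f t1 := by
      cases t1 <;> rfl
    have htv2 : termVal ((canStage K n).toInterp) f t2 = termVal (canInterp K) f t2 := by
      cases t2 <;> rfl
    rw [htv1, htv2]
    exact le_iSup (fun i => stR K i P _ _) n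
  | eqAt z t =>
    have htv : termVal ((canStage K n).toInterp) f t = termVal (canInterp K) f t := by
      cases t <;> rfl
    simp only [QAtom.mult]
    rw [htv]
    exact le_of_eq (if_congr Iff.rfl rfl rfl)

lemma key_atoms (K : Ontology) (q : CQ) (hr : q.Rooted) (f : Var → CanElem)
    (hans : ∀ v ∈ q.answerVars, ∃ b : Ind, f v = CanElem.ind b)
    (hz : ∀ atm ∈ q.atoms, QAtom.mult (canInterp K) f atm ≠ 0) :
    ∀ atm ∈ q.atoms, QAtom.mult (canInterp K) f atm
      = QAtom.mult ((canStage K q.atoms.length).toInterp) f atm := by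
  classical
  set n := q.atoms.length with hn
  set NC : Finset QAtom := q.atoms.toFinset.filter
      (fun atm => ∀ A t, atm ≠ QAtom.conceptAt A t) with hNC
  have hadj : ∀ x y, q.gaifmanAdj x y →
      cDepth (termVal (canInterp K) f x) ≤ cDepth (termVal (canInterp K) f y) + 1 := by
    rintro x y ⟨atm, hmem, hx, hy⟩
    have hpos := hz atm hmem
    cases atm with
    | conceptAt A t =>
      simp only [QAtom.terms, List.mem_singleton] at hx hy
      subst hx; subst hy
      exact Nat.le_succ _
    | roleAt P t1 t2 =>
      simp only [QAtom.terms, List.mem_cons, List.mem_singleton, List.not_mem_nil,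
        or_false] at hx hy
      have hr0 : (canInterp K).rI P (termVal (canInterp K) f t1)
          (termVal (canInterp K) f t2) ≠ 0 := hpos
      obtain ⟨i, hi⟩ : ∃ i, stR K i P (termVal (canInterp K) f t1)
          (termVal (canInterp K) f t2) ≠ 0 := by
        by_contra hall
        push_neg at hall
        exact hr0 (by exact ENat.iSup_eq_zero.2 hall)
      have hshape := stR_shape hi
      have hb : cDepth (termVal (canInterp K) f t1) ≤ cDepth (termVal (canInterp K) f t2) + 1
          ∧ cDepth (termVal (canInterp K) f t2) ≤ cDepth (termVal (canInterp K) f t1) + 1 := by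
        rcases hshape with ⟨a, b, h1, h2⟩ | ⟨R, j, h2⟩ | ⟨R, j, h1⟩
        · rw [h1, h2]; simp only [cDepth]; omega
        · rw [h2]; simp only [cDepth]; omega
        · rw [h1]; simp only [cDepth]; omega
      rcases hx with rfl | rfl <;> rcases hy with rfl | rfl
      · exact Nat.le_succ _
      · exact hb.1
      · exact hb.2
      · exact Nat.le_succ _
    | eqAt z t =>
      have heqv : termVal (canInterp K) f (Term.var z) = termVal (canInterp K) f t := by
        by_contra hne
        exact hpos (if_neg hne)
      simp only [QAtom.terms, List.mem_cons, List.mem_singleton, List.not_mem_nil,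
        or_false] at hx hy
      rcases hx with rfl | rfl <;> rcases hy with rfl | rfl <;> (try rw [heqv]) <;>
        exact Nat.le_succ _
  have hwalk : ∀ (x y : Term) (w : (gGraph q).Walk x y),
      cDepth (termVal (canInterp K) f x) ≤ cDepth (termVal (canInterp K) f y) + w.length := by
    intro x y w
    induction w with
    | nil => simp
    | @cons a b c h p ih =>
      have h1 := hadj a b h.2
      simp only [SimpleGraph.Walk.length_cons]
      omega
  have hpathlen : ∀ (x y : Term) (p : (gGraph q).Walk x y), p.IsPath → p.length ≤ NC.card := by
    intro x y p hp
    have hedge : ∀ e ∈ (gGraph q).edgeSet,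
        ∃ atm, atm ∈ NC ∧ ∀ z ∈ e, z ∈ QAtom.terms atm := by
      intro e
      induction e using Sym2.ind with
      | _ x' y' =>
        intro hE
        have hA := (SimpleGraph.mem_edgeSet (G := gGraph q)).1 hE
        obtain ⟨hne, atm, hm, hx', hy'⟩ := hA
        refine ⟨atm, ?_, ?_⟩
        · rw [hNC, Finset.mem_filter]
          refine ⟨List.mem_toFinset.2 hm, ?_⟩
          intro A t hat
          subst hat
          simp only [QAtom.terms, List.mem_singleton] at hx' hy'
          exact hne (hx'.trans hy'.symm)
        · intro z hzmem
          rcases Sym2.mem_iff.1 hzmem with rfl | rfl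
          · exact hx'
          · exact hy'
    let g : Sym2 Term → QAtom := fun e =>
      if h : e ∈ (gGraph q).edgeSet then (hedge e h).choose else QAtom.eqAt 0 (Term.var 0)
    have hg : ∀ e ∈ (gGraph q).edgeSet, g e ∈ NC ∧ ∀ z ∈ e, z ∈ QAtom.terms (g e) := by
      intro e he
      show (if h : e ∈ (gGraph q).edgeSet then (hedge e h).choose else QAtom.eqAt 0 (Term.var 0))
          ∈ NC ∧ ∀ z ∈ e, z ∈ QAtom.terms
            (if h : e ∈ (gGraph q).edgeSet then (hedge e h).choose else QAtom.eqAt 0 (Term.var 0))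
      rw [dif_pos he]
      exact (hedge e he).choose_spec
    have hinj : Set.InjOn g (p.edges.toFinset : Set (Sym2 Term)) := by
      intro e1 h1 e2 h2 heq
      have he1 : e1 ∈ (gGraph q).edgeSet :=
        p.edges_subset_edgeSet (List.mem_toFinset.1 (Finset.mem_coe.1 h1))
      have he2 : e2 ∈ (gGraph q).edgeSet :=
        p.edges_subset_edgeSet (List.mem_toFinset.1 (Finset.mem_coe.1 h2))
      have q1 : e1 = qPair (g e1) := edge_eq_qPair (gGraph q) (g e1) e1 he1 (hg e1 he1).2
      have q2 : e2 = qPair (g e2) := edge_eq_qPair (gGraph q) (g e2) e2 he2 (hg e2 he2).2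
      rw [q1, q2, heq]
    have hcard : p.edges.toFinset.card ≤ NC.card := by
      refine Finset.card_le_card_of_injOn g ?_ hinj
      intro e he
      exact (hg e (p.edges_subset_edgeSet (List.mem_toFinset.1 he))).1
    have hlen : p.edges.toFinset.card = p.length := by
      rw [List.toFinset_card_of_nodup hp.edges_nodup, SimpleGraph.Walk.length_edges]
    omega
  have hdepth : ∀ t, q.mentionsTerm t → cDepth (termVal (canInterp K) f t) ≤ NC.card := by
    intro t hm
    obtain ⟨t', hpath, hroot⟩ := hr t hm
    obtain ⟨w⟩ := reflTransGen_reachable q hpath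
    have hroot0 : cDepth (termVal (canInterp K) f t') = 0 := by
      rcases hroot with ⟨v, hv, rfl⟩ | ⟨b, rfl⟩
      · obtain ⟨b, hb⟩ := hans v hv
        show cDepth (f v) = 0
        rw [hb]
        rfl
      · rfl
    have h1 := hwalk t t' w.toPath.1
    have h2 := hpathlen t t' w.toPath.1 w.toPath.2
    omega
  have hNCn : NC.card ≤ n := by
    rw [hNC, hn]
    exact le_trans (Finset.card_le_card (Finset.filter_subset _ _)) (List.toFinset_card_le _)
  intro atm hmem
  have hpos := hz atm hmem
  cases atm with
  | conceptAt A t =>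
    have htv : termVal ((canStage K n).toInterp) f t = termVal (canInterp K) f t := by
      cases t <;> rfl
    show (canInterp K).cI A (termVal (canInterp K) f t)
        = stC K n A (termVal ((canStage K n).toInterp) f t)
    rw [htv]
    obtain ⟨i, hi⟩ := can_c_support (K := K) (A := A) (u := termVal (canInterp K) f t) hpos
    have hact := act_depth K i _ hi
    have hd : cDepth (termVal (canInterp K) f t) ≤ NC.card :=
      hdepth t ⟨QAtom.conceptAt A t, hmem, by simp [QAtom.terms]⟩
    have hlt : NC.card < q.atoms.toFinset.card := by
      refine Finset.card_lt_card ?_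
      rw [hNC]
      rw [Finset.ssubset_iff_of_subset (Finset.filter_subset _ _)]
      refine ⟨QAtom.conceptAt A t, List.mem_toFinset.2 hmem, ?_⟩
      intro hcmem
      exact (Finset.mem_filter.1 hcmem).2 A t rfl
    have hn1 : cDepth (termVal (canInterp K) f t) + 1 ≤ n := by
      have hle := List.toFinset_card_le q.atoms
      omega
    rw [can_c hact A]
    exact (stC_stable hact hn1 A).symm
  | roleAt P t1 t2 =>
    have htv1 : termVal ((canStage K n).toInterp) f t1 = termVal (canInterp K) f t1 := by
      cases t1 <;> rfl
    have htv2 : termVal ((canStage K n).toInterp) f t2 = termVal (canInterp K) f t2 := by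
      cases t2 <;> rfl
    show (canInterp K).rI P (termVal (canInterp K) f t1) (termVal (canInterp K) f t2)
        = stR K n P (termVal ((canStage K n).toInterp) f t1)
            (termVal ((canStage K n).toInterp) f t2)
    rw [htv1, htv2]
    obtain ⟨i, hi1, hi2⟩ := can_r_support (K := K) (P := P) hpos
    have ha1 := act_depth K i _ hi1
    have ha2 := act_depth K i _ hi2
    have hd1 : cDepth (termVal (canInterp K) f t1) ≤ NC.card :=
      hdepth t1 ⟨QAtom.roleAt P t1 t2, hmem, by simp [QAtom.terms]⟩
    have hd2 : cDepth (termVal (canInterp K) f t2) ≤ NC.card :=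
      hdepth t2 ⟨QAtom.roleAt P t1 t2, hmem, by simp [QAtom.terms]⟩
    exact can_r (stAct_mono K (by omega) ha1) (stAct_mono K (by omega) ha2) P
  | eqAt z t =>
    have htv : termVal ((canStage K n).toInterp) f t = termVal (canInterp K) f t := by
      cases t <;> rfl
    simp only [QAtom.mult]
    rw [htv]
    exact if_congr Iff.rfl rfl rfl

end Statement6Aux

/-- For a satisfiable DL-Lite_core^bag ontology `K` and a rooted
CQ `q` with `n` atoms, the bag answers of `q` over `C(K)` equal the bag answers
of `q` over the finite stage `C_n(K)`. -/
theorem statement_6 (K : Ontology) (hcore : TBox.IsCore K.tbox)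
    (hsat : K.Satisfiable)
    (q : CQ) (hwf : q.WellFormed) (hr : q.Rooted) (a : List Ind) :
    q.bagAnswer (canInterp K) a
      = q.bagAnswer (PreInterp.toInterp (canStage K q.atoms.length)) a := by
  show bagSum (fun f : {f : Var → CanElem //
        (∀ v, v ∉ q.vars → f v = CanElem.ind 0) ∧
        q.answerVars.map f = a.map CanElem.ind} =>
      (q.atoms.map (QAtom.mult (canInterp K) f.1)).prod)
    = bagSum (fun f : {f : Var → CanElem //
        (∀ v, v ∉ q.vars → f v = CanElem.ind 0) ∧
        q.answerVars.map f = a.map CanElem.ind} =>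
      (q.atoms.map (QAtom.mult ((canStage K q.atoms.length).toInterp) f.1)).prod)
  refine congrArg bagSum (funext fun f => ?_)
  have hans : ∀ v ∈ q.answerVars, ∃ b : Ind, f.1 v = CanElem.ind b := by
    intro v hv
    have hmm : f.1 v ∈ q.answerVars.map f.1 := List.mem_map_of_mem hv
    rw [f.2.2] at hmm
    obtain ⟨b, _, hb⟩ := List.mem_map.1 hmm
    exact ⟨b, hb.symm⟩
  by_cases hz : ∀ atm ∈ q.atoms, QAtom.mult (canInterp K) f.1 atm ≠ 0
  · exact congrArg List.prod (List.map_congr_left (key_atoms K q hr f.1 hans hz))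
  · push_neg at hz
    obtain ⟨atm, hmem, h0⟩ := hz
    have h0' : QAtom.mult ((canStage K q.atoms.length).toInterp) f.1 atm = 0 :=
      le_antisymm (h0 ▸ mult_stage_le_can K q.atoms.length f.1 atm) zero_le
    rw [List.prod_eq_zero (List.mem_map.2 ⟨atm, hmem, h0⟩),
      List.prod_eq_zero (List.mem_map.2 ⟨atm, hmem, h0'⟩)]
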